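/- Let n ≥ 1. On the polynomial algebra ℂ[x₁,…,xₙ], for a ∈ {1,…,2n} let q̂ₐ denote the ℂ-linear endomorphism given by: multiplication by xₐ if 1 ≤ a ≤ n, and −i·∂/∂x_{a−n} if n+1 ≤ a ≤ 2n. For X ∈ Mat_{2n}(ℂ) with Xᵀ Jₙ + Jₙ X = 0, set π(X) = (i/2) Σ_{a,b=1}^{2n} (Jₙ X)_{b,a} · (q̂ₐ ∘ q̂_b). Then for all X, Y ∈ Mat_{2n}(ℂ) with Xᵀ Jₙ + Jₙ X = 0 and Yᵀ Jₙ + Jₙ Y = 0, one has π(X) ∘ π(Y) − π(Y) ∘ π(X) = π(XY − YX); that is, π is a Lie algebra homomorphism from sp_n(ℂ) into the endomorphisms of ℂ[x₁,…,xₙ] (the Schrödinger model of the oscillator representation). -/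

import Mathlib

open Matrix MvPolynomial

/-- The standard complex symplectic matrix `Jₙ = [[0, 1ₙ], [−1ₙ, 0]]`. -/
noncomputable def Jmat (n : ℕ) : Matrix (Fin n ⊕ Fin n) (Fin n ⊕ Fin n) ℂ :=
  Matrix.fromBlocks 0 1 (-1) 0

/-- The quantized coordinates `q̂ₐ` on `ℂ[x₁,…,xₙ]`: multiplication by `xₐ` for `a ≤ n`
(`Sum.inl`), and `−i ∂/∂x_{a−n}` for `a > n` (`Sum.inr`). -/
noncomputable def qop (n : ℕ) : Fin n ⊕ Fin n → Module.End ℂ (MvPolynomial (Fin n) ℂ)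
  | Sum.inl a => LinearMap.mulLeft ℂ (MvPolynomial.X a)
  | Sum.inr a => (-Complex.I) • (MvPolynomial.pderiv a).toLinearMap

/-- The quantized moment map representation
`π(X) = (i/2) Σ_{a,b} (Jₙ X)_{b,a} q̂ₐ ∘ q̂_b`. -/
noncomputable def oscRep (n : ℕ) (X : Matrix (Fin n ⊕ Fin n) (Fin n ⊕ Fin n) ℂ) :
    Module.End ℂ (MvPolynomial (Fin n) ℂ) :=
  (Complex.I / 2) • ∑ a : Fin n ⊕ Fin n, ∑ b : Fin n ⊕ Fin n,
    ((Jmat n * X) b a) • (qop n a * qop n b)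

lemma Jmat_transpose (n : ℕ) : (Jmat n)ᵀ = -(Jmat n) := by
  ext (i|i) (j|j) <;> simp [Jmat, Matrix.one_apply, eq_comm]

lemma Jmat_mul_Jmat (n : ℕ) : Jmat n * Jmat n = -1 := by
  simp [Jmat, Matrix.fromBlocks_multiply]
  ext (i|i) (j|j) <;> simp [Matrix.one_apply]

lemma pderiv_comm' {n : ℕ} (i j : Fin n) (p : MvPolynomial (Fin n) ℂ) :
    pderiv i (pderiv j p) = pderiv j (pderiv i p) := by
  induction p using MvPolynomial.induction_on' with
  | add p q hp hq => simp [hp, hq]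
  | monomial s a =>
    rcases eq_or_ne i j with rfl | hij
    · rfl
    · simp only [pderiv_monomial, Finsupp.tsub_apply, Finsupp.single_apply,
        if_neg hij, if_neg (Ne.symm hij), tsub_zero, tsub_tsub]
      rw [add_comm]
      ring_nf

lemma pd_mulLeft {n : ℕ} (a b : Fin n) :
    (pderiv b).toLinearMap * LinearMap.mulLeft ℂ (X a : MvPolynomial (Fin n) ℂ)
      = LinearMap.mulLeft ℂ (X a : MvPolynomial (Fin n) ℂ) * (pderiv b).toLinearMap
        + (if b = a then (1:ℂ) else 0) • 1 := by
  refine LinearMap.ext fun p => ?_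
  simp only [Module.End.mul_apply, LinearMap.add_apply, LinearMap.smul_apply,
    Module.End.one_apply, LinearMap.mulLeft_apply, Derivation.coeFn_coe]
  rw [pderiv_mul]
  rcases eq_or_ne b a with rfl | h
  · simp [pderiv_X_self, add_comm]
  · simp [pderiv_X_of_ne (Ne.symm h), h]

lemma pd_comm {n : ℕ} (a b : Fin n) :
    (pderiv a).toLinearMap * (pderiv b).toLinearMap
      = (pderiv b).toLinearMap * ((pderiv a).toLinearMap
        : Module.End ℂ (MvPolynomial (Fin n) ℂ)) :=
  LinearMap.ext fun p => pderiv_comm' a b p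

lemma mulLeft_comm' {n : ℕ} (a b : Fin n) :
    LinearMap.mulLeft ℂ (X a : MvPolynomial (Fin n) ℂ) * LinearMap.mulLeft ℂ (X b)
      = LinearMap.mulLeft ℂ (X b : MvPolynomial (Fin n) ℂ) * LinearMap.mulLeft ℂ (X a) :=
  LinearMap.ext fun p => by simp [Module.End.mul_apply, mul_left_comm]

lemma ccr {n : ℕ} (a b : Fin n ⊕ Fin n) :
    qop n a * qop n b = qop n b * qop n a + (Complex.I * Jmat n a b) • 1 := by
  rcases a with a | a <;> rcases b with b | b
  · simp [qop, Jmat, mulLeft_comm' a b]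
  · simp only [qop, Jmat, smul_mul_assoc, mul_smul_comm, pd_mulLeft, fromBlocks_apply₁₂,
      Matrix.one_apply, smul_add, smul_smul]
    rcases eq_or_ne a b with rfl | hab
    · simp only [if_pos rfl, mul_one]
      module
    · simp [hab, Ne.symm hab]
      module
  · simp only [qop, Jmat, smul_mul_assoc, mul_smul_comm, pd_mulLeft, fromBlocks_apply₂₁,
      Matrix.neg_apply, Matrix.one_apply, smul_add, smul_smul]
    rcases eq_or_ne a b with rfl | hab
    · simp only [if_pos rfl, mul_one]
      module
    · simp [hab, Ne.symm hab]
      module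
  · simp [qop, Jmat, smul_mul_assoc, mul_smul_comm, pd_comm a b, smul_smul]

lemma swap4 {R : Type*} [Ring R] [Module ℂ R] [SMulCommClass ℂ R R] [IsScalarTower ℂ R R]
    (a b c d : R) (s1 s2 s3 s4 : ℂ)
    (h1 : b * c = c * b + s1 • 1) (h2 : b * d = d * b + s2 • 1)
    (h3 : a * c = c * a + s3 • 1) (h4 : a * d = d * a + s4 • 1) :
    a * b * (c * d) - c * d * (a * b)
      = s1 • (a * d) + s2 • (a * c) + s3 • (d * b) + s4 • (c * b) := by
  have k1 : a * b * (c * d) = a * c * (b * d) + s1 • (a * d) := by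
    have t : a * b * (c * d) = a * (b * c) * d := by noncomm_ring
    rw [t, h1, mul_add, add_mul, mul_smul_comm, mul_one, smul_mul_assoc]
    congr 1
    noncomm_ring
  have k2 : a * c * (b * d) = a * c * (d * b) + s2 • (a * c) := by
    rw [h2, mul_add, mul_smul_comm, mul_one]
  have k3 : a * c * (d * b) = c * a * (d * b) + s3 • (d * b) := by
    conv_lhs => rw [show a * c * (d * b) = (a * c) * (d * b) from rfl, h3]
    rw [add_mul, smul_mul_assoc, one_mul]
  have k4 : c * a * (d * b) = c * d * (a * b) + s4 • (c * b) := by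
    have t : c * a * (d * b) = c * (a * d) * b := by noncomm_ring
    rw [t, h4, mul_add, add_mul, mul_smul_comm, mul_one, smul_mul_assoc]
    congr 1
    noncomm_ring
  rw [k1, k2, k3, k4]
  module

lemma sum3_perm {β : Type*} [AddCommMonoid β] {ι : Type*} [Fintype ι] (g : ι → ι → ι → β) :
    ∑ b : ι, ∑ c : ι, ∑ d : ι, g b c d = ∑ d : ι, ∑ b : ι, ∑ c : ι, g b c d := by
  calc ∑ b : ι, ∑ c : ι, ∑ d : ι, g b c d
      = ∑ b : ι, ∑ d : ι, ∑ c : ι, g b c d :=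
        Finset.sum_congr rfl fun _ _ => Finset.sum_comm
    _ = ∑ d : ι, ∑ b : ι, ∑ c : ι, g b c d := Finset.sum_comm

lemma sum4_rev {β : Type*} [AddCommMonoid β] {ι : Type*} [Fintype ι] (g : ι → ι → ι → ι → β) :
    ∑ c : ι, ∑ d : ι, ∑ a : ι, ∑ b : ι, g a b c d
      = ∑ a : ι, ∑ b : ι, ∑ c : ι, ∑ d : ι, g a b c d := by
  calc ∑ c : ι, ∑ d : ι, ∑ a : ι, ∑ b : ι, g a b c d
      = ∑ c : ι, ∑ a : ι, ∑ d : ι, ∑ b : ι, g a b c d :=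
        Finset.sum_congr rfl fun _ _ => Finset.sum_comm
    _ = ∑ a : ι, ∑ c : ι, ∑ d : ι, ∑ b : ι, g a b c d := Finset.sum_comm
    _ = ∑ a : ι, ∑ c : ι, ∑ b : ι, ∑ d : ι, g a b c d :=
        Finset.sum_congr rfl fun _ _ => Finset.sum_congr rfl fun _ _ => Finset.sum_comm
    _ = ∑ a : ι, ∑ b : ι, ∑ c : ι, ∑ d : ι, g a b c d :=
        Finset.sum_congr rfl fun _ _ => Finset.sum_comm

noncomputable def Sop (n : ℕ) (M : Matrix (Fin n ⊕ Fin n) (Fin n ⊕ Fin n) ℂ) :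
    Module.End ℂ (MvPolynomial (Fin n) ℂ) :=
  ∑ a : Fin n ⊕ Fin n, ∑ b : Fin n ⊕ Fin n, M b a • (qop n a * qop n b)

lemma Sop_mul (n : ℕ) (M N : Matrix (Fin n ⊕ Fin n) (Fin n ⊕ Fin n) ℂ) :
    Sop n M * Sop n N = ∑ a : Fin n ⊕ Fin n, ∑ b : Fin n ⊕ Fin n, ∑ c : Fin n ⊕ Fin n,
      ∑ d : Fin n ⊕ Fin n,
        (M b a * N d c) • ((qop n a * qop n b) * (qop n c * qop n d)) := by
  rw [Sop, Sop, Finset.sum_mul]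
  refine Finset.sum_congr rfl fun a _ => ?_
  rw [Finset.sum_mul]
  refine Finset.sum_congr rfl fun b _ => ?_
  rw [smul_mul_assoc]
  simp only [Finset.mul_sum, mul_smul_comm, Finset.smul_sum, smul_smul]

set_option maxHeartbeats 2000000 in
lemma Sop_comm (n : ℕ) (M N : Matrix (Fin n ⊕ Fin n) (Fin n ⊕ Fin n) ℂ)
    (hM : ∀ i j, M i j = M j i) (hN : ∀ i j, N i j = N j i) :
    Sop n M * Sop n N - Sop n N * Sop n M
      = Complex.I • (Sop n (M * Jmat n * N)ᵀ + Sop n (M * Jmat n * N)ᵀ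
          + Sop n (M * Jmat n * N) + Sop n (M * Jmat n * N)) := by
  have h2 : Sop n N * Sop n M
      = ∑ a : Fin n ⊕ Fin n, ∑ b : Fin n ⊕ Fin n, ∑ c : Fin n ⊕ Fin n, ∑ d : Fin n ⊕ Fin n,
          (M b a * N d c) • ((qop n c * qop n d) * (qop n a * qop n b)) := by
    rw [Sop_mul n N M,
      sum4_rev (fun a b c d => (N d c * M b a) • ((qop n c * qop n d) * (qop n a * qop n b)))]
    refine Finset.sum_congr rfl fun a _ => Finset.sum_congr rfl fun b _ =>
      Finset.sum_congr rfl fun c _ => Finset.sum_congr rfl fun d _ => by rw [mul_comm (N d c)]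
  have comm4 : ∀ a b c d, (qop n a * qop n b) * (qop n c * qop n d)
        - (qop n c * qop n d) * (qop n a * qop n b)
      = (Complex.I * Jmat n b c) • (qop n a * qop n d)
        + (Complex.I * Jmat n b d) • (qop n a * qop n c)
        + (Complex.I * Jmat n a c) • (qop n d * qop n b)
        + (Complex.I * Jmat n a d) • (qop n c * qop n b) :=
    fun a b c d => swap4 _ _ _ _ _ _ _ _ (ccr b c) (ccr b d) (ccr a c) (ccr a d)
  rw [Sop_mul n M N, h2]
  simp only [← Finset.sum_sub_distrib]
  have h3 : (∑ a : Fin n ⊕ Fin n, ∑ b : Fin n ⊕ Fin n, ∑ c : Fin n ⊕ Fin n,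
        ∑ d : Fin n ⊕ Fin n,
        ((M b a * N d c) • (qop n a * qop n b * (qop n c * qop n d))
          - (M b a * N d c) • (qop n c * qop n d * (qop n a * qop n b))))
      = ∑ a : Fin n ⊕ Fin n, ∑ b : Fin n ⊕ Fin n, ∑ c : Fin n ⊕ Fin n, ∑ d : Fin n ⊕ Fin n,
        (M b a * N d c) •
          ((Complex.I * Jmat n b c) • (qop n a * qop n d)
            + (Complex.I * Jmat n b d) • (qop n a * qop n c)
            + (Complex.I * Jmat n a c) • (qop n d * qop n b)
            + (Complex.I * Jmat n a d) • (qop n c * qop n b)) :=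
    Finset.sum_congr rfl fun a _ => Finset.sum_congr rfl fun b _ =>
      Finset.sum_congr rfl fun c _ => Finset.sum_congr rfl fun d _ =>
        ((smul_sub (M b a * N d c) _ _).symm).trans (by rw [comm4])
  rw [h3]
  simp only [smul_add, Finset.sum_add_distrib, smul_smul]
  have hT1 : (∑ a : Fin n ⊕ Fin n, ∑ b : Fin n ⊕ Fin n, ∑ c : Fin n ⊕ Fin n,
        ∑ d : Fin n ⊕ Fin n,
        (M b a * N d c * (Complex.I * Jmat n b c)) • (qop n a * qop n d))
      = Complex.I • Sop n (M * Jmat n * N)ᵀ := by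
    calc (∑ a : Fin n ⊕ Fin n, ∑ b : Fin n ⊕ Fin n, ∑ c : Fin n ⊕ Fin n, ∑ d : Fin n ⊕ Fin n,
          (M b a * N d c * (Complex.I * Jmat n b c)) • (qop n a * qop n d))
        = ∑ a : Fin n ⊕ Fin n, ∑ d : Fin n ⊕ Fin n, ∑ b : Fin n ⊕ Fin n, ∑ c : Fin n ⊕ Fin n,
            (M b a * N d c * (Complex.I * Jmat n b c)) • (qop n a * qop n d) :=
          Finset.sum_congr rfl fun a _ => sum3_perm _
      _ = ∑ a : Fin n ⊕ Fin n, ∑ d : Fin n ⊕ Fin n,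
            (∑ b : Fin n ⊕ Fin n, ∑ c : Fin n ⊕ Fin n,
              M b a * N d c * (Complex.I * Jmat n b c)) • (qop n a * qop n d) :=
          Finset.sum_congr rfl fun a _ => Finset.sum_congr rfl fun d _ =>
            ((Finset.sum_smul).trans
              (Finset.sum_congr rfl fun b _ => Finset.sum_smul)).symm
      _ = ∑ a : Fin n ⊕ Fin n, ∑ d : Fin n ⊕ Fin n,
            (Complex.I * (M * Jmat n * N) a d) • (qop n a * qop n d) := by
          refine Finset.sum_congr rfl fun a _ => Finset.sum_congr rfl fun d _ => ?_
          congr 1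
          rw [Finset.sum_comm]
          simp only [Matrix.mul_apply]
          rw [Finset.mul_sum]
          refine Finset.sum_congr rfl fun c _ => ?_
          rw [Finset.sum_mul, Finset.mul_sum]
          refine Finset.sum_congr rfl fun b _ => ?_
          rw [hM b a, hN d c]; ring
      _ = Complex.I • Sop n (M * Jmat n * N)ᵀ := by
          rw [Sop, Finset.smul_sum]
          refine Finset.sum_congr rfl fun a _ => ?_
          rw [Finset.smul_sum]
          exact Finset.sum_congr rfl fun d _ => by
            rw [Matrix.transpose_apply, smul_smul]
  have hT2 : (∑ a : Fin n ⊕ Fin n, ∑ b : Fin n ⊕ Fin n, ∑ c : Fin n ⊕ Fin n,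
        ∑ d : Fin n ⊕ Fin n,
        (M b a * N d c * (Complex.I * Jmat n b d)) • (qop n a * qop n c))
      = Complex.I • Sop n (M * Jmat n * N)ᵀ := by
    calc (∑ a : Fin n ⊕ Fin n, ∑ b : Fin n ⊕ Fin n, ∑ c : Fin n ⊕ Fin n, ∑ d : Fin n ⊕ Fin n,
          (M b a * N d c * (Complex.I * Jmat n b d)) • (qop n a * qop n c))
        = ∑ a : Fin n ⊕ Fin n, ∑ c : Fin n ⊕ Fin n, ∑ b : Fin n ⊕ Fin n, ∑ d : Fin n ⊕ Fin n,
            (M b a * N d c * (Complex.I * Jmat n b d)) • (qop n a * qop n c) :=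
          Finset.sum_congr rfl fun a _ => Finset.sum_comm
      _ = ∑ a : Fin n ⊕ Fin n, ∑ c : Fin n ⊕ Fin n,
            (∑ b : Fin n ⊕ Fin n, ∑ d : Fin n ⊕ Fin n,
              M b a * N d c * (Complex.I * Jmat n b d)) • (qop n a * qop n c) :=
          Finset.sum_congr rfl fun a _ => Finset.sum_congr rfl fun c _ =>
            ((Finset.sum_smul).trans
              (Finset.sum_congr rfl fun b _ => Finset.sum_smul)).symm
      _ = ∑ a : Fin n ⊕ Fin n, ∑ c : Fin n ⊕ Fin n,
            (Complex.I * (M * Jmat n * N) a c) • (qop n a * qop n c) := by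
          refine Finset.sum_congr rfl fun a _ => Finset.sum_congr rfl fun c _ => ?_
          congr 1
          rw [Finset.sum_comm]
          simp only [Matrix.mul_apply]
          rw [Finset.mul_sum]
          refine Finset.sum_congr rfl fun d _ => ?_
          rw [Finset.sum_mul, Finset.mul_sum]
          refine Finset.sum_congr rfl fun b _ => ?_
          rw [hM b a]; ring
      _ = Complex.I • Sop n (M * Jmat n * N)ᵀ := by
          rw [Sop, Finset.smul_sum]
          refine Finset.sum_congr rfl fun a _ => ?_
          rw [Finset.smul_sum]
          exact Finset.sum_congr rfl fun c _ => by
            rw [Matrix.transpose_apply, smul_smul]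
  have hT3 : (∑ a : Fin n ⊕ Fin n, ∑ b : Fin n ⊕ Fin n, ∑ c : Fin n ⊕ Fin n,
        ∑ d : Fin n ⊕ Fin n,
        (M b a * N d c * (Complex.I * Jmat n a c)) • (qop n d * qop n b))
      = Complex.I • Sop n (M * Jmat n * N) := by
    calc (∑ a : Fin n ⊕ Fin n, ∑ b : Fin n ⊕ Fin n, ∑ c : Fin n ⊕ Fin n, ∑ d : Fin n ⊕ Fin n,
          (M b a * N d c * (Complex.I * Jmat n a c)) • (qop n d * qop n b))
        = ∑ b : Fin n ⊕ Fin n, ∑ a : Fin n ⊕ Fin n, ∑ c : Fin n ⊕ Fin n, ∑ d : Fin n ⊕ Fin n,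
            (M b a * N d c * (Complex.I * Jmat n a c)) • (qop n d * qop n b) :=
          Finset.sum_comm
      _ = ∑ b : Fin n ⊕ Fin n, ∑ d : Fin n ⊕ Fin n, ∑ a : Fin n ⊕ Fin n, ∑ c : Fin n ⊕ Fin n,
            (M b a * N d c * (Complex.I * Jmat n a c)) • (qop n d * qop n b) :=
          Finset.sum_congr rfl fun b _ => sum3_perm _
      _ = ∑ b : Fin n ⊕ Fin n, ∑ d : Fin n ⊕ Fin n,
            (∑ a : Fin n ⊕ Fin n, ∑ c : Fin n ⊕ Fin n,
              M b a * N d c * (Complex.I * Jmat n a c)) • (qop n d * qop n b) :=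
          Finset.sum_congr rfl fun b _ => Finset.sum_congr rfl fun d _ =>
            ((Finset.sum_smul).trans
              (Finset.sum_congr rfl fun a _ => Finset.sum_smul)).symm
      _ = ∑ b : Fin n ⊕ Fin n, ∑ d : Fin n ⊕ Fin n,
            (Complex.I * (M * Jmat n * N) b d) • (qop n d * qop n b) := by
          refine Finset.sum_congr rfl fun b _ => Finset.sum_congr rfl fun d _ => ?_
          congr 1
          rw [Finset.sum_comm]
          simp only [Matrix.mul_apply]
          rw [Finset.mul_sum]
          refine Finset.sum_congr rfl fun c _ => ?_
          rw [Finset.sum_mul, Finset.mul_sum]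
          refine Finset.sum_congr rfl fun a _ => ?_
          rw [hN d c]; ring
      _ = Complex.I • Sop n (M * Jmat n * N) := by
          rw [Finset.sum_comm, Sop, Finset.smul_sum]
          refine Finset.sum_congr rfl fun d _ => ?_
          rw [Finset.smul_sum]
          exact Finset.sum_congr rfl fun b _ => by rw [smul_smul]
  have hT4 : (∑ a : Fin n ⊕ Fin n, ∑ b : Fin n ⊕ Fin n, ∑ c : Fin n ⊕ Fin n,
        ∑ d : Fin n ⊕ Fin n,
        (M b a * N d c * (Complex.I * Jmat n a d)) • (qop n c * qop n b))
      = Complex.I • Sop n (M * Jmat n * N) := by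
    calc (∑ a : Fin n ⊕ Fin n, ∑ b : Fin n ⊕ Fin n, ∑ c : Fin n ⊕ Fin n, ∑ d : Fin n ⊕ Fin n,
          (M b a * N d c * (Complex.I * Jmat n a d)) • (qop n c * qop n b))
        = ∑ b : Fin n ⊕ Fin n, ∑ a : Fin n ⊕ Fin n, ∑ c : Fin n ⊕ Fin n, ∑ d : Fin n ⊕ Fin n,
            (M b a * N d c * (Complex.I * Jmat n a d)) • (qop n c * qop n b) :=
          Finset.sum_comm
      _ = ∑ b : Fin n ⊕ Fin n, ∑ c : Fin n ⊕ Fin n, ∑ a : Fin n ⊕ Fin n, ∑ d : Fin n ⊕ Fin n,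
            (M b a * N d c * (Complex.I * Jmat n a d)) • (qop n c * qop n b) :=
          Finset.sum_congr rfl fun b _ => Finset.sum_comm
      _ = ∑ b : Fin n ⊕ Fin n, ∑ c : Fin n ⊕ Fin n,
            (∑ a : Fin n ⊕ Fin n, ∑ d : Fin n ⊕ Fin n,
              M b a * N d c * (Complex.I * Jmat n a d)) • (qop n c * qop n b) :=
          Finset.sum_congr rfl fun b _ => Finset.sum_congr rfl fun c _ =>
            ((Finset.sum_smul).trans
              (Finset.sum_congr rfl fun a _ => Finset.sum_smul)).symm
      _ = ∑ b : Fin n ⊕ Fin n, ∑ c : Fin n ⊕ Fin n,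
            (Complex.I * (M * Jmat n * N) b c) • (qop n c * qop n b) := by
          refine Finset.sum_congr rfl fun b _ => Finset.sum_congr rfl fun c _ => ?_
          congr 1
          rw [Finset.sum_comm]
          simp only [Matrix.mul_apply]
          rw [Finset.mul_sum]
          refine Finset.sum_congr rfl fun d _ => ?_
          rw [Finset.sum_mul, Finset.mul_sum]
          refine Finset.sum_congr rfl fun a _ => ?_
          ring
      _ = Complex.I • Sop n (M * Jmat n * N) := by
          rw [Finset.sum_comm, Sop, Finset.smul_sum]
          refine Finset.sum_congr rfl fun c _ => ?_
          rw [Finset.smul_sum]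
          exact Finset.sum_congr rfl fun b _ => by rw [smul_smul]
  rw [hT1, hT2, hT3, hT4]

lemma Sop_neg (n : ℕ) (M : Matrix (Fin n ⊕ Fin n) (Fin n ⊕ Fin n) ℂ) :
    Sop n (-M) = -(Sop n M) := by
  rw [Sop, Sop]
  have h : ∀ a b : Fin n ⊕ Fin n,
      (-M) b a • (qop n a * qop n b) = -(M b a • (qop n a * qop n b)) := fun a b => by
    rw [Matrix.neg_apply]; module
  simp only [h, Finset.sum_neg_distrib]

lemma Sop_add (n : ℕ) (M N : Matrix (Fin n ⊕ Fin n) (Fin n ⊕ Fin n) ℂ) :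
    Sop n (M + N) = Sop n M + Sop n N := by
  rw [Sop, Sop, Sop]
  have h : ∀ a b : Fin n ⊕ Fin n,
      (M + N) b a • (qop n a * qop n b)
        = M b a • (qop n a * qop n b) + N b a • (qop n a * qop n b) := fun a b => by
    rw [Matrix.add_apply]; exact add_smul _ _ _
  simp only [h, Finset.sum_add_distrib]

/-- The Schrödinger model of the oscillator representation: `π` is a Lie algebra
homomorphism from `sp_n(ℂ)` into the endomorphisms of `ℂ[x₁,…,xₙ]`. -/
theorem oscRep_lie_hom (n : ℕ) (hn : 1 ≤ n)
    (X Y : Matrix (Fin n ⊕ Fin n) (Fin n ⊕ Fin n) ℂ)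
    (hX : Xᵀ * Jmat n + Jmat n * X = 0)
    (hY : Yᵀ * Jmat n + Jmat n * Y = 0) :
    oscRep n X * oscRep n Y - oscRep n Y * oscRep n X = oscRep n (X * Y - Y * X) := by
  have hJJ := Jmat_mul_Jmat n
  have hJT := Jmat_transpose n
  have hXJ : Xᵀ * Jmat n = -(Jmat n * X) := eq_neg_of_add_eq_zero_left hX
  have hYJ : Yᵀ * Jmat n = -(Jmat n * Y) := eq_neg_of_add_eq_zero_left hY
  have hMT : (Jmat n * X)ᵀ = Jmat n * X := by
    rw [Matrix.transpose_mul, hJT, Matrix.mul_neg, hXJ, neg_neg]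
  have hNT : (Jmat n * Y)ᵀ = Jmat n * Y := by
    rw [Matrix.transpose_mul, hJT, Matrix.mul_neg, hYJ, neg_neg]
  have hMsym : ∀ i j, (Jmat n * X) i j = (Jmat n * X) j i := by
    intro i j
    conv_lhs => rw [← hMT, Matrix.transpose_apply]
  have hNsym : ∀ i j, (Jmat n * Y) i j = (Jmat n * Y) j i := by
    intro i j
    conv_lhs => rw [← hNT, Matrix.transpose_apply]
  have hP : Jmat n * X * Jmat n * (Jmat n * Y) = -(Jmat n * (X * Y)) := by
    calc Jmat n * X * Jmat n * (Jmat n * Y)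
        = Jmat n * X * (Jmat n * (Jmat n * Y)) := Matrix.mul_assoc _ _ _
      _ = Jmat n * X * (Jmat n * Jmat n * Y) := by
          rw [← Matrix.mul_assoc (Jmat n) (Jmat n) Y]
      _ = -(Jmat n * X * Y) := by rw [hJJ, neg_one_mul, Matrix.mul_neg]
      _ = -(Jmat n * (X * Y)) := by rw [Matrix.mul_assoc]
  have hPT : (Jmat n * X * Jmat n * (Jmat n * Y))ᵀ = Jmat n * (Y * X) := by
    calc (Jmat n * X * Jmat n * (Jmat n * Y))ᵀ
        = -((X * Y)ᵀ * (Jmat n)ᵀ) := by rw [hP, Matrix.transpose_neg, Matrix.transpose_mul]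
      _ = -(Yᵀ * Xᵀ * (-(Jmat n))) := by rw [Matrix.transpose_mul, hJT]
      _ = Yᵀ * Xᵀ * Jmat n := by rw [Matrix.mul_neg, neg_neg]
      _ = Yᵀ * (Xᵀ * Jmat n) := Matrix.mul_assoc _ _ _
      _ = -(Yᵀ * (Jmat n * X)) := by rw [hXJ, Matrix.mul_neg]
      _ = -(Yᵀ * Jmat n * X) := by rw [Matrix.mul_assoc]
      _ = Jmat n * Y * X := by rw [hYJ, Matrix.neg_mul, neg_neg]
      _ = Jmat n * (Y * X) := Matrix.mul_assoc _ _ _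
  have hE : Jmat n * (X * Y - Y * X)
      = -((Jmat n * X * Jmat n * (Jmat n * Y))ᵀ + Jmat n * X * Jmat n * (Jmat n * Y)) := by
    rw [Matrix.mul_sub, hPT]
    rw [show Jmat n * (X * Y) = -(Jmat n * X * Jmat n * (Jmat n * Y)) from by rw [hP, neg_neg]]
    abel
  have hSE : Sop n (Jmat n * (X * Y - Y * X))
      = -(Sop n (Jmat n * X * Jmat n * (Jmat n * Y))ᵀ
          + Sop n (Jmat n * X * Jmat n * (Jmat n * Y))) := by
    rw [hE, Sop_neg, Sop_add]
  have e1 : oscRep n X = (Complex.I / 2) • Sop n (Jmat n * X) := rfl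
  have e2 : oscRep n Y = (Complex.I / 2) • Sop n (Jmat n * Y) := rfl
  have e3 : oscRep n (X * Y - Y * X) = (Complex.I / 2) • Sop n (Jmat n * (X * Y - Y * X)) := rfl
  have comb : ∀ A B : Module.End ℂ (MvPolynomial (Fin n) ℂ),
      ((Complex.I / 2) • A) * ((Complex.I / 2) • B)
        = (Complex.I / 2 * (Complex.I / 2)) • (A * B) := fun A B =>
    (smul_mul_smul_comm (Complex.I / 2) A (Complex.I / 2) B)
  have h := Sop_comm n (Jmat n * X) (Jmat n * Y) hMsym hNsym
  rw [sub_eq_iff_eq_add] at h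
  rw [e1, e2, e3, comb, comb, h, hSE]
  match_scalars
  all_goals (try ring_nf)
  all_goals
    (rw [show Complex.I ^ 3 = Complex.I ^ 2 * Complex.I from pow_succ _ 2, Complex.I_sq]; ring)
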